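/- For all real x and p with 0 ≤ x ≤ 1, p ≥ 0 and px < 1, one has 1 ≥ (1+x)^p (1 − px) ≥ exp( − p(1+p)(1+px²) x² / (2(1−px)²) ). -/

import Mathlib

open Real Set

private lemma aux_log_lower (y : ℝ) (hy : 0 ≤ y) :
    y - y ^ 2 / 2 ≤ Real.log (1 + y) := by
  have key : MonotoneOn (fun t : ℝ => Real.log (1 + t) - t + t ^ 2 / 2) (Ici 0) := by
    apply monotoneOn_of_deriv_nonneg (convex_Ici 0)
    · apply ContinuousOn.add
      · apply ContinuousOn.sub
        · apply ContinuousOn.log (by fun_prop)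
          intro t ht
          have : (0:ℝ) ≤ t := ht
          nlinarith
        · fun_prop
      · fun_prop
    · intro t ht
      simp only [interior_Ici, mem_Ioi] at ht
      have h1 : (1 + t) ≠ 0 := by nlinarith
      have hd : HasDerivAt (fun s : ℝ => Real.log (1 + s) - s + s ^ 2 / 2)
          (1 / (1 + t) - 1 + t) t := by
        have d1 : HasDerivAt (fun s : ℝ => 1 + s) 1 t := (hasDerivAt_id t).const_add 1
        have d2 : HasDerivAt (fun s : ℝ => Real.log (1 + s)) (1 / (1 + t)) t :=
          d1.log h1
        have d3 : HasDerivAt (fun s : ℝ => s ^ 2 / 2) (t) t := by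
          have := (hasDerivAt_pow 2 t).div_const 2
          simpa using this
        exact (d2.sub (hasDerivAt_id' t)).add d3
      exact hd.differentiableAt.differentiableWithinAt
    · intro t ht
      simp only [interior_Ici, mem_Ioi] at ht
      have h1 : (0:ℝ) < 1 + t := by linarith
      have hd : HasDerivAt (fun s : ℝ => Real.log (1 + s) - s + s ^ 2 / 2)
          (1 / (1 + t) - 1 + t) t := by
        have d1 : HasDerivAt (fun s : ℝ => 1 + s) 1 t := (hasDerivAt_id t).const_add 1
        have d2 : HasDerivAt (fun s : ℝ => Real.log (1 + s)) (1 / (1 + t)) t :=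
          d1.log h1.ne'
        have d3 : HasDerivAt (fun s : ℝ => s ^ 2 / 2) (t) t := by
          have := (hasDerivAt_pow 2 t).div_const 2
          simpa using this
        exact (d2.sub (hasDerivAt_id' t)).add d3
      rw [hd.deriv, show 1 / (1 + t) - 1 + t = t ^ 2 / (1 + t) from by field_simp; ring]
      positivity
  have h := key (self_mem_Ici) (mem_Ici.mpr hy) hy
  simp only [add_zero, Real.log_one] at h
  norm_num at h
  linarith

private lemma aux_log_upper (u : ℝ) (hu : 0 ≤ u) :
    Real.log (1 + u) ≤ u - u ^ 2 / (2 * (1 + u)) := by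
  have key : MonotoneOn (fun t : ℝ => t - t ^ 2 / (2 * (1 + t)) - Real.log (1 + t)) (Ici 0) := by
    apply monotoneOn_of_deriv_nonneg (convex_Ici 0)
    · apply ContinuousOn.sub
      · apply ContinuousOn.sub
        · fun_prop
        · apply ContinuousOn.div (by fun_prop) (by fun_prop)
          intro t ht
          have : (0:ℝ) ≤ t := ht
          nlinarith
      · apply ContinuousOn.log (by fun_prop)
        intro t ht
        have : (0:ℝ) ≤ t := ht
        nlinarith
    · intro t ht
      simp only [interior_Ici, mem_Ioi] at ht
      have h1 : (0:ℝ) < 1 + t := by linarith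
      have h2 : (2 * (1 + t)) ≠ 0 := by positivity
      apply DifferentiableAt.differentiableWithinAt
      apply DifferentiableAt.sub
      · apply DifferentiableAt.sub (differentiableAt_fun_id)
        exact (differentiableAt_pow 2).div (by fun_prop) h2
      · exact ((differentiableAt_fun_id.const_add 1).log h1.ne')
    · intro t ht
      simp only [interior_Ici, mem_Ioi] at ht
      have h1 : (0:ℝ) < 1 + t := by linarith
      have h2 : (2 * (1 + t)) ≠ 0 := by positivity
      have hd : HasDerivAt (fun s : ℝ => s - s ^ 2 / (2 * (1 + s)) - Real.log (1 + s))
          (1 - (2 * t * (2 * (1 + t)) - t ^ 2 * 2) / (2 * (1 + t)) ^ 2 - 1 / (1 + t)) t := by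
        have d1 : HasDerivAt (fun s : ℝ => 1 + s) 1 t := (hasDerivAt_id t).const_add 1
        have dlog : HasDerivAt (fun s : ℝ => Real.log (1 + s)) (1 / (1 + t)) t :=
          d1.log h1.ne'
        have dden : HasDerivAt (fun s : ℝ => 2 * (1 + s)) 2 t := by
          simpa using d1.const_mul 2
        have dnum : HasDerivAt (fun s : ℝ => s ^ 2) (2 * t) t := by
          simpa using hasDerivAt_pow 2 t
        have dfrac : HasDerivAt (fun s : ℝ => s ^ 2 / (2 * (1 + s)))
            ((2 * t * (2 * (1 + t)) - t ^ 2 * 2) / (2 * (1 + t)) ^ 2) t :=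
          dnum.div dden h2
        exact ((hasDerivAt_id t).sub dfrac).sub dlog
      rw [hd.deriv, show 1 - (2 * t * (2 * (1 + t)) - t ^ 2 * 2) / (2 * (1 + t)) ^ 2 - 1 / (1 + t)
          = t ^ 2 / (2 * (1 + t) ^ 2) from by field_simp; ring]
      positivity
  have h := key (self_mem_Ici) (mem_Ici.mpr hu) hu
  simp only [add_zero, Real.log_one] at h
  norm_num at h
  linarith

/-- Lemma A.1: for `0 ≤ x ≤ 1`, `p ≥ 0` with `p*x < 1`, one has
`1 ≥ (1+x)^p (1 - p*x) ≥ exp(- p(1+p)(1+p x²) x² / (2(1-p x)²))`. -/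
theorem elementary_inequality (x p : ℝ) (hx0 : 0 ≤ x) (hx1 : x ≤ 1)
    (hp : 0 ≤ p) (hpx : p * x < 1) :
    (1 + x) ^ p * (1 - p * x) ≤ 1 ∧
    Real.exp (-(p * (1 + p) * (1 + p * x ^ 2) * x ^ 2 / (2 * (1 - p * x) ^ 2)))
      ≤ (1 + x) ^ p * (1 - p * x) := by
  have h1x : (0:ℝ) < 1 + x := by linarith
  have hd : (0:ℝ) < 1 - p * x := by linarith
  have hrw : (1 + x) ^ p * (1 - p * x)
      = Real.exp (p * Real.log (1 + x) + Real.log (1 - p * x)) := by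
    rw [Real.exp_add, Real.rpow_def_of_pos h1x, Real.exp_log hd, mul_comm (Real.log (1+x)) p]
  set a := Real.log (1 + x) with ha
  set b := Real.log (1 - p * x) with hb
  constructor
  · rw [hrw]
    have haux : a ≤ x := by
      have := Real.log_le_sub_one_of_pos h1x
      linarith
    have hbux : b ≤ -(p * x) := by
      have := Real.log_le_sub_one_of_pos hd
      linarith
    calc Real.exp (p * a + b) ≤ Real.exp 0 := by
          apply Real.exp_le_exp.mpr
          nlinarith
      _ = 1 := Real.exp_zero
  · rw [hrw]
    apply Real.exp_le_exp.mpr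
    -- lower bound on a
    have halow : x - x ^ 2 / 2 ≤ a := aux_log_lower x hx0
    -- lower bound on b via aux_log_upper with u = p*x/(1-p*x)
    have hblow : -(p * x) - (p * x) ^ 2 / (2 * (1 - p * x)) ≤ b := by
      set u := p * x / (1 - p * x) with hu
      have hu0 : 0 ≤ u := by positivity
      have h1u : 1 + u = 1 / (1 - p * x) := by
        rw [hu]; field_simp; ring
      have hlog : Real.log (1 + u) = -b := by
        rw [h1u, Real.log_div one_ne_zero hd.ne', Real.log_one, hb]; ring
      have := aux_log_upper u hu0
      rw [hlog] at this
      have hval : u - u ^ 2 / (2 * (1 + u)) = p * x + (p * x) ^ 2 / (2 * (1 - p * x)) := by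
        rw [h1u, hu]
        field_simp
        ring
      rw [hval] at this
      linarith
    have hpx2 : 0 ≤ p * x := by positivity
    have h2d : (0:ℝ) < 1 - p * x := hd
    have hdiff : (0:ℝ) ≤ p ^ 2 * x ^ 3 * (x + 2 + p) := by positivity
    have poly : p * x ^ 2 * (1 - p * x) ^ 2 + (p * x) ^ 2 * (1 - p * x)
        ≤ p * (1 + p) * (1 + p * x ^ 2) * x ^ 2 := by nlinarith [hdiff]
    have eq1 : p * x ^ 2 / 2 + (p * x) ^ 2 / (2 * (1 - p * x))
        = (p * x ^ 2 * (1 - p * x) ^ 2 + (p * x) ^ 2 * (1 - p * x)) / (2 * (1 - p * x) ^ 2) := by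
      field_simp
    have h2d2 : (0:ℝ) < 2 * (1 - p * x) ^ 2 := by positivity
    have key2 : p * x ^ 2 / 2 + (p * x) ^ 2 / (2 * (1 - p * x))
        ≤ p * (1 + p) * (1 + p * x ^ 2) * x ^ 2 / (2 * (1 - p * x) ^ 2) := by
      rw [eq1]
      exact (div_le_div_iff_of_pos_right h2d2).mpr poly
    have key : -(p * (1 + p) * (1 + p * x ^ 2) * x ^ 2 / (2 * (1 - p * x) ^ 2))
        ≤ p * (x - x ^ 2 / 2) + (-(p * x) - (p * x) ^ 2 / (2 * (1 - p * x))) := by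
      nlinarith [key2]
    calc -(p * (1 + p) * (1 + p * x ^ 2) * x ^ 2 / (2 * (1 - p * x) ^ 2))
        ≤ p * (x - x ^ 2 / 2) + (-(p * x) - (p * x) ^ 2 / (2 * (1 - p * x))) := key
      _ ≤ p * a + b := by nlinarith [mul_le_mul_of_nonneg_left halow hp]
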